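/- Let ψ : ℝ^J → M^J assign to x = (x_1,…,x_J) the vector of measures ψ_j(x)(B) = Σ_{k∈C(j)} ρ_{k,j} ∫_{B ∩ (x_j, min_{i∈S(k|j)} x_i]} (1 - G_k(ξ)) dξ. Then for all x, y ∈ ℝ^J and each j, sup_{B Borel} |ψ_j(x)(B) - ψ_j(y)(B)| ≤ 2 max_{l=1,…,J} |x_l - y_l|, provided Σ_{k∈C(j)} ρ_{k,j} = 1. In particular ψ is continuous in total variation norm. -/

import Mathlib

open scoped Classical

open MeasureTheory

/-- Stations visited by class `k` strictly before station `j` along its route. -/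
def priorStations {J K : ℕ} (path : Fin K → List (Fin J)) (k : Fin K) (j : Fin J) :
    Finset (Fin J) :=
  ((path k).takeWhile (fun i => i ≠ j)).toFinset

/-- `ψ_j(x)(B) = Σ_{k ∈ C(j)} ρ_{k,j} ∫_{B ∩ (x_j, min_{i ∈ S(k|j)} x_i]} (1 - G_k(ξ)) dξ`,
where the minimum over the empty set is `+∞`, giving the interval `(x_j, ∞)`. -/
noncomputable def psiVal {J K : ℕ} (path : Fin K → List (Fin J))
    (ρ : Fin K → Fin J → ℝ) (G : Fin K → ℝ → ℝ)
    (x : Fin J → ℝ) (j : Fin J) (B : Set ℝ) : ℝ :=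
  ∑ k ∈ Finset.univ.filter (fun k => j ∈ path k),
    ρ k j * ∫ ξ in B ∩ (if h : (priorStations path k j).Nonempty
        then Set.Ioc (x j) ((priorStations path k j).inf' h x)
        else Set.Ioi (x j)), (1 - G k ξ)

/-- On a set of measure `≤ ε`, the integral of a function with values in `[0,1]` lies in `[0, ε]`. -/
lemma integral_bound_aux (f : ℝ → ℝ) (h0 : ∀ ξ, 0 ≤ f ξ) (h1 : ∀ ξ, f ξ ≤ 1)
    (U : Set ℝ) (hU : MeasurableSet U) (ε : ℝ) (hε : 0 ≤ ε)
    (hvol : volume U ≤ ENNReal.ofReal ε) (hint : IntegrableOn f U volume) :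
    0 ≤ (∫ ξ in U, f ξ) ∧ (∫ ξ in U, f ξ) ≤ ε := by
  have hfin : volume U < ⊤ := lt_of_le_of_lt hvol ENNReal.ofReal_lt_top
  constructor
  · exact setIntegral_nonneg hU fun ξ _ => h0 ξ
  · calc (∫ ξ in U, f ξ) ≤ ∫ _ξ in U, (1 : ℝ) := by
          exact setIntegral_mono_on hint ((integrableOn_const_iff).mpr (Or.inr hfin)) hU
            (fun ξ _ => h1 ξ)
    _ = (volume U).toReal := by simp [setIntegral_const, Measure.real]
    _ ≤ ε := ENNReal.toReal_le_of_le_ofReal hε hvol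

/-- Key lemma: difference of set integrals of a `[0,1]`-valued function over two sets whose
differences both have measure `≤ ε`. -/
lemma keyInt (f : ℝ → ℝ) (hf : Measurable f) (h0 : ∀ ξ, 0 ≤ f ξ) (h1 : ∀ ξ, f ξ ≤ 1)
    (S T : Set ℝ) (hS : MeasurableSet S) (hT : MeasurableSet T) (ε : ℝ) (hε : 0 ≤ ε)
    (hST : volume (S \ T) ≤ ENNReal.ofReal ε) (hTS : volume (T \ S) ≤ ENNReal.ofReal ε) :
    |(∫ ξ in S, f ξ) - ∫ ξ in T, f ξ| ≤ ε := by
  have hnorm : ∀ ξ, ‖f ξ‖ ≤ 1 := fun ξ => by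
    rw [Real.norm_eq_abs, abs_of_nonneg (h0 ξ)]; exact h1 ξ
  have hfinST : volume (S \ T) ≠ ⊤ := (lt_of_le_of_lt hST ENNReal.ofReal_lt_top).ne
  have hfinTS : volume (T \ S) ≠ ⊤ := (lt_of_le_of_lt hTS ENNReal.ofReal_lt_top).ne
  have hintST : IntegrableOn f (S \ T) volume :=
    Measure.integrableOn_of_bounded hfinST hf.aestronglyMeasurable
      (Filter.Eventually.of_forall hnorm)
  have hintTS : IntegrableOn f (T \ S) volume :=
    Measure.integrableOn_of_bounded hfinTS hf.aestronglyMeasurable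
      (Filter.Eventually.of_forall hnorm)
  by_cases hint : IntegrableOn f S volume
  · have hintT : IntegrableOn f T volume := by
      refine (hint.union hintTS).mono_set ?_
      intro ξ hξ
      by_cases hmem : ξ ∈ S
      · exact Or.inl hmem
      · exact Or.inr ⟨hξ, hmem⟩
    have e1 : (∫ ξ in S ∩ T, f ξ) + ∫ ξ in S \ T, f ξ = ∫ ξ in S, f ξ :=
      integral_inter_add_diff hT hint
    have e2 : (∫ ξ in T ∩ S, f ξ) + ∫ ξ in T \ S, f ξ = ∫ ξ in T, f ξ :=
      integral_inter_add_diff hS hintT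
    have hcomm : T ∩ S = S ∩ T := Set.inter_comm _ _
    have key : (∫ ξ in S, f ξ) - ∫ ξ in T, f ξ
        = (∫ ξ in S \ T, f ξ) - ∫ ξ in T \ S, f ξ := by
      rw [← e1, ← e2, hcomm]; ring
    obtain ⟨h1ST, h2ST⟩ := integral_bound_aux f h0 h1 (S \ T) (hS.diff hT) ε hε hST hintST
    obtain ⟨h1TS, h2TS⟩ := integral_bound_aux f h0 h1 (T \ S) (hT.diff hS) ε hε hTS hintTS
    rw [key, abs_le]
    constructor <;> linarith
  · have hintT : ¬ IntegrableOn f T volume := by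
      intro hintT
      apply hint
      refine (hintT.union hintST).mono_set ?_
      intro ξ hξ
      by_cases hmem : ξ ∈ T
      · exact Or.inl hmem
      · exact Or.inr ⟨hξ, hmem⟩
    rw [integral_undef hint, integral_undef hintT]
    simpa using hε
  
/-- `|inf' x − inf' y| ≤ M` if pointwise `|x i − y i| ≤ M`. -/
lemma abs_inf'_sub_le {J : ℕ} (S : Finset (Fin J)) (h : S.Nonempty) (x y : Fin J → ℝ)
    (M : ℝ) (hM : ∀ i, |x i - y i| ≤ M) : |S.inf' h x - S.inf' h y| ≤ M := by
  rw [abs_sub_le_iff]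
  constructor
  · obtain ⟨i, hi, he⟩ := Finset.exists_mem_eq_inf' h y
    calc S.inf' h x - S.inf' h y ≤ x i - y i := by
          rw [he]; exact sub_le_sub_right (Finset.inf'_le _ hi) _
    _ ≤ |x i - y i| := le_abs_self _
    _ ≤ M := hM i
  · obtain ⟨i, hi, he⟩ := Finset.exists_mem_eq_inf' h x
    calc S.inf' h y - S.inf' h x ≤ y i - x i := by
          rw [he]; exact sub_le_sub_right (Finset.inf'_le _ hi) _
    _ ≤ |x i - y i| := by rw [abs_sub_comm]; exact le_abs_self _
    _ ≤ M := hM i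

lemma vol_Ioc_diff_Ioc (a b c d : ℝ) :
    volume (Set.Ioc a b \ Set.Ioc c d) ≤ ENNReal.ofReal (|a - c| + |b - d|) := by
  have hsub : Set.Ioc a b \ Set.Ioc c d ⊆ Set.Ioc a (min b c) ∪ Set.Ioc (max a d) b := by
    intro ξ ⟨⟨hξ1, hξ2⟩, hξ3⟩
    by_cases hc : c < ξ
    · have hd : d < ξ := by
        by_contra hd
        exact hξ3 ⟨hc, not_lt.mp hd⟩
      exact Or.inr ⟨max_lt hξ1 hd, hξ2⟩
    · exact Or.inl ⟨hξ1, le_min hξ2 (not_lt.mp hc)⟩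
  calc volume (Set.Ioc a b \ Set.Ioc c d)
      ≤ volume (Set.Ioc a (min b c)) + volume (Set.Ioc (max a d) b) :=
        le_trans (measure_mono hsub) (measure_union_le _ _)
    _ = ENNReal.ofReal (min b c - a) + ENNReal.ofReal (b - max a d) := by
        rw [Real.volume_Ioc, Real.volume_Ioc]
    _ ≤ ENNReal.ofReal |a - c| + ENNReal.ofReal |b - d| := by
        gcongr
        · calc min b c - a ≤ c - a := by gcongr; exact min_le_right _ _
            _ ≤ |a - c| := by rw [abs_sub_comm]; exact le_abs_self _
        · calc b - max a d ≤ b - d := by gcongr; exact le_max_right _ _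
            _ ≤ |b - d| := le_abs_self _
    _ = ENNReal.ofReal (|a - c| + |b - d|) :=
        (ENNReal.ofReal_add (abs_nonneg _) (abs_nonneg _)).symm

lemma vol_Ioi_diff_Ioi (a c : ℝ) :
    volume (Set.Ioi a \ Set.Ioi c) ≤ ENNReal.ofReal |a - c| := by
  have hsub : Set.Ioi a \ Set.Ioi c ⊆ Set.Ioc a c := by
    intro ξ ⟨hξ1, hξ2⟩
    exact ⟨hξ1, not_lt.mp hξ2⟩
  calc volume (Set.Ioi a \ Set.Ioi c) ≤ volume (Set.Ioc a c) := measure_mono hsub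
    _ = ENNReal.ofReal (c - a) := Real.volume_Ioc
    _ ≤ ENNReal.ofReal |a - c| := by
        apply ENNReal.ofReal_le_ofReal
        rw [abs_sub_comm]; exact le_abs_self _

theorem stmt16 {J K : ℕ} (hJ : 0 < J)
    (path : Fin K → List (Fin J))
    (ρ : Fin K → Fin J → ℝ) (hρ : ∀ j k, 0 ≤ ρ k j)
    (hρsum : ∀ j : Fin J, ∑ k ∈ Finset.univ.filter (fun k => j ∈ path k), ρ k j = 1)
    (G : Fin K → ℝ → ℝ)
    (hmono : ∀ k, Monotone (G k))
    (hG0 : ∀ k ξ, 0 ≤ G k ξ) (hG1 : ∀ k ξ, G k ξ ≤ 1) :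
    ∀ (x y : Fin J → ℝ) (j : Fin J) (B : Set ℝ), MeasurableSet B →
      |psiVal path ρ G x j B - psiVal path ρ G y j B| ≤
        2 * Finset.univ.sup' ⟨⟨0, hJ⟩, Finset.mem_univ _⟩ (fun l => |x l - y l|) := by
  intro x y j B hB
  set M : ℝ := Finset.univ.sup' ⟨⟨0, hJ⟩, Finset.mem_univ _⟩ (fun l => |x l - y l|) with hMdef
  have hl : ∀ l, |x l - y l| ≤ M := fun l => Finset.le_sup' (f := fun l => |x l - y l|) (Finset.mem_univ l)
  have hM : 0 ≤ M := le_trans (abs_nonneg _) (hl ⟨0, hJ⟩)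
  have h2M : (0:ℝ) ≤ 2 * M := by linarith
  -- interval for a given point vector
  set I : (Fin J → ℝ) → Fin K → Set ℝ := fun z k =>
    if h : (priorStations path k j).Nonempty
      then Set.Ioc (z j) ((priorStations path k j).inf' h z)
      else Set.Ioi (z j) with hIdef
  have hImeas : ∀ z k, MeasurableSet (I z k) := by
    intro z k
    by_cases h : (priorStations path k j).Nonempty
    · simp only [hIdef, dif_pos h]; exact measurableSet_Ioc
    · simp only [hIdef, dif_neg h]; exact measurableSet_Ioi
  have hIvol : ∀ k, volume (I x k \ I y k) ≤ ENNReal.ofReal (2 * M)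
      ∧ volume (I y k \ I x k) ≤ ENNReal.ofReal (2 * M) := by
    intro k
    by_cases h : (priorStations path k j).Nonempty
    · simp only [hIdef, dif_pos h]
      have hinf : |(priorStations path k j).inf' h x - (priorStations path k j).inf' h y| ≤ M :=
        abs_inf'_sub_le _ h x y M hl
      have hinf' : |(priorStations path k j).inf' h y - (priorStations path k j).inf' h x| ≤ M := by
        rwa [abs_sub_comm]
      constructor
      · refine le_trans (vol_Ioc_diff_Ioc _ _ _ _) (ENNReal.ofReal_le_ofReal ?_)
        have := hl j
        linarith
      · refine le_trans (vol_Ioc_diff_Ioc _ _ _ _) (ENNReal.ofReal_le_ofReal ?_)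
        have := hl j
        rw [abs_sub_comm (y j)] at *
        linarith
    · simp only [hIdef, dif_neg h]
      constructor
      · refine le_trans (vol_Ioi_diff_Ioi _ _) (ENNReal.ofReal_le_ofReal ?_)
        have := hl j
        linarith [abs_nonneg (x j - y j)]
      · refine le_trans (vol_Ioi_diff_Ioi _ _) (ENNReal.ofReal_le_ofReal ?_)
        have := hl j
        rw [abs_sub_comm (y j)]
        linarith [abs_nonneg (x j - y j)]
  -- per-class bound
  have hd : ∀ k, |(∫ ξ in B ∩ I x k, (1 - G k ξ)) - ∫ ξ in B ∩ I y k, (1 - G k ξ)| ≤ 2 * M := by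
    intro k
    refine keyInt (fun ξ => 1 - G k ξ) (measurable_const.sub (hmono k).measurable)
      (fun ξ => show (0:ℝ) ≤ 1 - G k ξ by linarith [hG1 k ξ])
      (fun ξ => show (1:ℝ) - G k ξ ≤ 1 by linarith [hG0 k ξ])
      (B ∩ I x k) (B ∩ I y k) (hB.inter (hImeas x k)) (hB.inter (hImeas y k))
      (2 * M) h2M ?_ ?_
    · refine le_trans (measure_mono ?_) (hIvol k).1
      intro ξ ⟨⟨hξB, hξI⟩, hξn⟩
      exact ⟨hξI, fun hξI' => hξn ⟨hξB, hξI'⟩⟩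
    · refine le_trans (measure_mono ?_) (hIvol k).2
      intro ξ ⟨⟨hξB, hξI⟩, hξn⟩
      exact ⟨hξI, fun hξI' => hξn ⟨hξB, hξI'⟩⟩
  -- combine
  have hpsi : psiVal path ρ G x j B - psiVal path ρ G y j B
      = ∑ k ∈ Finset.univ.filter (fun k => j ∈ path k),
          ρ k j * ((∫ ξ in B ∩ I x k, (1 - G k ξ)) - ∫ ξ in B ∩ I y k, (1 - G k ξ)) := by
    simp only [psiVal, hIdef, mul_sub]
    rw [Finset.sum_sub_distrib]
  rw [hpsi]
  calc |∑ k ∈ Finset.univ.filter (fun k => j ∈ path k),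
          ρ k j * ((∫ ξ in B ∩ I x k, (1 - G k ξ)) - ∫ ξ in B ∩ I y k, (1 - G k ξ))|
      ≤ ∑ k ∈ Finset.univ.filter (fun k => j ∈ path k),
          |ρ k j * ((∫ ξ in B ∩ I x k, (1 - G k ξ)) - ∫ ξ in B ∩ I y k, (1 - G k ξ))| :=
        Finset.abs_sum_le_sum_abs _ _
    _ ≤ ∑ k ∈ Finset.univ.filter (fun k => j ∈ path k), ρ k j * (2 * M) := by
        refine Finset.sum_le_sum (fun k _ => ?_)
        rw [abs_mul, abs_of_nonneg (hρ j k)]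
        exact mul_le_mul_of_nonneg_left (hd k) (hρ j k)
    _ = 2 * M := by rw [← Finset.sum_mul, hρsum j, one_mul]
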